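/- Let Z_1 and Z_2 be independent M_{q,q}(ℝ)-valued random variables with all Kronecker moments finite. Then E((Z_1 + Z_2)^{⊗k}) = Σ_{l=0}^{k} Σ_{π ∈ 𝔖((l,k−l))} E(π(Z_1, 𝟙)) ∘ E(π(𝟙, Z_2)), where for π = (π_1,…,π_k) with values in {1,2}, π(A,B) = C_{π_1} ⊗ ⋯ ⊗ C_{π_k} with C_1 = A, C_2 = B, 𝟙 is the all-ones q×q matrix, ⊗ the Kronecker product, and ∘ the Hadamard product. -/

import Mathlib

open Matrix MeasureTheory ProbabilityTheory Finset
open scoped ProbabilityTheory ENNReal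

/-- Matrices carry the product measurable structure of their entries. -/
instance {m n : Type*} : MeasurableSpace (Matrix m n ℝ) := MeasurableSpace.pi

private lemma aux_memLp_mul {Ω : Type*} [MeasureSpace Ω] {f g : Ω → ℝ}
    (hf : ∀ r : ℕ, MemLp f r ℙ) (hg : ∀ r : ℕ, MemLp g r ℙ) (r : ℕ) :
    MemLp (fun ω => f ω * g ω) r ℙ := by
  have hr : (1 : ℝ≥0∞) / r = 1 / ((2 * r : ℕ) : ℝ≥0∞) + 1 / ((2 * r : ℕ) : ℝ≥0∞) := by
    rcases Nat.eq_zero_or_pos r with rfl | hr0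
    · simp
    · push_cast
      rw [ENNReal.div_add_div_same, show ((1:ℝ≥0∞)+1) = 2 from by norm_num,
        ← ENNReal.mul_div_mul_left (c := 2) 1 (r : ℝ≥0∞) two_ne_zero ENNReal.ofNat_ne_top,
        mul_one]
  haveI : ENNReal.HolderTriple ((2 * r : ℕ) : ℝ≥0∞) ((2 * r : ℕ) : ℝ≥0∞) (r : ℝ≥0∞) :=
    ⟨by simpa only [one_div] using hr.symm⟩
  have h := (hf (2 * r)).smul (hg (2 * r)) (r := (r : ℝ≥0∞))
  exact (by simpa [Pi.smul_apply, smul_eq_mul, mul_comm] using h : MemLp (f * g) r ℙ)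

private lemma aux_memLp_prod {Ω : Type*} [MeasureSpace Ω]
    [IsProbabilityMeasure (ℙ : Measure Ω)] {ι : Type*} (s : Finset ι) (h : ι → Ω → ℝ)
    (hh : ∀ i ∈ s, ∀ r : ℕ, MemLp (h i) r ℙ) :
    ∀ r : ℕ, MemLp (fun ω => ∏ i ∈ s, h i ω) r ℙ := by
  classical
  induction s using Finset.cons_induction with
  | empty => intro r; simpa using memLp_const (1 : ℝ)
  | cons a s ha ih =>
    intro r
    simp only [Finset.prod_cons]
    exact aux_memLp_mul (hh a (Finset.mem_cons_self a s))
      (ih (fun i hi => hh i (Finset.mem_cons_of_mem hi))) r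

/-- For independent `M_q(ℝ)`-valued random variables `Z_1, Z_2` with all
moments finite,
`E((Z_1+Z_2)^{⊗k}) = Σ_{l=0}^{k} Σ_{π ∈ 𝔖((l,k-l))} E(π(Z_1,𝟙)) ∘ E(π(𝟙,Z_2))`,
stated entrywise at `(f,g)`: the entry of `π(A,B) = C_{π_1} ⊗ ⋯ ⊗ C_{π_k}`
(with `C_1 = A`, `C_2 = B`, `𝟙` the all-ones matrix) is
`∏ j, C_{π_j} (f j) (g j)`, and the Hadamard product multiplies entries. -/
theorem kronecker_moment_of_sum_independent {q : ℕ} {Ω : Type*} [MeasureSpace Ω]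
    (hprob : IsProbabilityMeasure (ℙ : Measure Ω))
    (Z₁ Z₂ : Ω → Matrix (Fin q) (Fin q) ℝ)
    (hmeas₁ : Measurable Z₁) (hmeas₂ : Measurable Z₂)
    (hindep : IndepFun Z₁ Z₂ ℙ)
    (hmom₁ : ∀ (r : ℕ) (i j : Fin q), MemLp (fun ω => Z₁ ω i j) r ℙ)
    (hmom₂ : ∀ (r : ℕ) (i j : Fin q), MemLp (fun ω => Z₂ ω i j) r ℙ) :
    ∀ (k : ℕ) (f g : Fin k → Fin q),
      ∫ ω, ∏ j, (Z₁ ω + Z₂ ω) (f j) (g j) =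
        ∑ l ∈ Finset.range (k + 1),
          ∑ π ∈ Finset.univ.filter
              (fun π : Fin k → Fin 2 =>
                (Finset.univ.filter fun j => π j = 0).card = l),
            (∫ ω, ∏ j, (if π j = 0 then Z₁ ω (f j) (g j) else 1)) *
              ∫ ω, ∏ j, (if π j = 0 then 1 else Z₂ ω (f j) (g j)) := by
  intro k f g
  classical
  set A : (Fin k → Fin 2) → Ω → ℝ :=
    fun π ω => ∏ j, (if π j = 0 then Z₁ ω (f j) (g j) else 1) with hA_def
  set B : (Fin k → Fin 2) → Ω → ℝ :=
    fun π ω => ∏ j, (if π j = 0 then 1 else Z₂ ω (f j) (g j)) with hB_def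
  -- entry measurability
  have hent : ∀ (W : Ω → Matrix (Fin q) (Fin q) ℝ), Measurable W →
      ∀ i j : Fin q, Measurable (fun ω => W ω i j) := fun W hW i j =>
    (measurable_pi_apply j).comp ((measurable_pi_apply i).comp hW)
  -- maps φ, ψ on matrices
  have hφ : ∀ π : Fin k → Fin 2, Measurable
      (fun M : Matrix (Fin q) (Fin q) ℝ => ∏ j, (if π j = 0 then M (f j) (g j) else 1)) := by
    intro π
    apply Finset.measurable_prod
    intro j _
    by_cases h : π j = 0 <;> simp only [h, if_true, if_false, if_pos, if_neg]
    · exact (measurable_pi_apply (g j)).comp (measurable_pi_apply (f j))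
    · exact measurable_const
  have hψ : ∀ π : Fin k → Fin 2, Measurable
      (fun M : Matrix (Fin q) (Fin q) ℝ => ∏ j, (if π j = 0 then 1 else M (f j) (g j))) := by
    intro π
    apply Finset.measurable_prod
    intro j _
    by_cases h : π j = 0 <;> simp only [h, if_true, if_false]
    · exact measurable_const
    · exact (measurable_pi_apply (g j)).comp (measurable_pi_apply (f j))
  have hAmeas : ∀ π, Measurable (A π) := fun π => (hφ π).comp hmeas₁
  have hBmeas : ∀ π, Measurable (B π) := fun π => (hψ π).comp hmeas₂
  have hABindep : ∀ π, IndepFun (A π) (B π) ℙ := fun π => hindep.comp (hφ π) (hψ π)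
  -- moments
  have hALp : ∀ π, ∀ r : ℕ, MemLp (A π) r ℙ := by
    intro π r
    refine aux_memLp_prod _ _ (fun j _ r' => ?_) r
    by_cases h : π j = 0 <;> simp only [h, if_true, if_false]
    · exact hmom₁ r' _ _
    · exact memLp_const 1
  have hBLp : ∀ π, ∀ r : ℕ, MemLp (B π) r ℙ := by
    intro π r
    refine aux_memLp_prod _ _ (fun j _ r' => ?_) r
    by_cases h : π j = 0 <;> simp only [h, if_true, if_false]
    · exact memLp_const 1
    · exact hmom₂ r' _ _
  have hAint : ∀ π, Integrable (A π) ℙ := fun π => by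
    have := hALp π 1; rwa [Nat.cast_one, memLp_one_iff_integrable] at this
  have hBint : ∀ π, Integrable (B π) ℙ := fun π => by
    have := hBLp π 1; rwa [Nat.cast_one, memLp_one_iff_integrable] at this
  -- pointwise expansion
  have expand : ∀ ω, ∏ j, (Z₁ ω + Z₂ ω) (f j) (g j) =
      ∑ π : Fin k → Fin 2, A π ω * B π ω := by
    intro ω
    have h1 : ∀ j : Fin k, (Z₁ ω + Z₂ ω) (f j) (g j) =
        ∑ i : Fin 2, (if i = 0 then Z₁ ω (f j) (g j) else Z₂ ω (f j) (g j)) := by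
      intro j
      rw [Fin.sum_univ_two]
      simp [Matrix.add_apply]
    calc ∏ j, (Z₁ ω + Z₂ ω) (f j) (g j)
        = ∏ j, ∑ i ∈ (Finset.univ : Finset (Fin 2)),
            (if i = 0 then Z₁ ω (f j) (g j) else Z₂ ω (f j) (g j)) :=
          Finset.prod_congr rfl fun j _ => h1 j
      _ = ∑ π ∈ Fintype.piFinset (fun _ : Fin k => (Finset.univ : Finset (Fin 2))),
            ∏ j, (if π j = 0 then Z₁ ω (f j) (g j) else Z₂ ω (f j) (g j)) :=
          Finset.prod_univ_sum _ _
      _ = ∑ π : Fin k → Fin 2, A π ω * B π ω := by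
          rw [Fintype.piFinset_univ]
          refine Finset.sum_congr rfl fun π _ => ?_
          rw [hA_def, hB_def, ← Finset.prod_mul_distrib]
          refine Finset.prod_congr rfl fun j _ => ?_
          by_cases h : π j = 0 <;> simp [h]
  -- integrate
  have hABint : ∀ π : Fin k → Fin 2, Integrable (fun ω => A π ω * B π ω) ℙ := fun π =>
    (hABindep π).integrable_mul (hAint π) (hBint π)
  have lhs_eq : ∫ ω, ∏ j, (Z₁ ω + Z₂ ω) (f j) (g j) =
      ∑ π : Fin k → Fin 2, (∫ ω, A π ω) * ∫ ω, B π ω := by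
    rw [integral_congr_ae (Filter.Eventually.of_forall expand),
      integral_finset_sum _ (fun π _ => hABint π)]
    exact Finset.sum_congr rfl fun π _ =>
      (hABindep π).integral_mul_eq_mul_integral (hAmeas π).aestronglyMeasurable (hBmeas π).aestronglyMeasurable
  rw [lhs_eq]
  -- regroup the sum by the number of 0s
  have hmaps : ∀ π ∈ (Finset.univ : Finset (Fin k → Fin 2)),
      (Finset.univ.filter fun j => π j = 0).card ∈ Finset.range (k + 1) := fun π _ =>
    Finset.mem_range.mpr (Nat.lt_succ_of_le
      ((Finset.card_filter_le _ _).trans_eq (Finset.card_fin k)))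
  rw [← Finset.sum_fiberwise_of_maps_to hmaps
    (fun π : Fin k → Fin 2 => (∫ ω, A π ω) * ∫ ω, B π ω)]
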